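/- Let γ be a nonzero complex number, let ℓ ≥ 1 and m = 2ℓ+1. Suppose ν and ν′ are monic polynomials in ℂ[x] of degree m whose coefficient of x^{m−1} is zero, and that each of them satisfies: its sum with γ and its difference with γ can each be written as g²·h with g monic of degree ℓ, h monic of degree 1, and g·h squarefree. Then there exists a ∈ ℂ such that either a^m = 1 and ν′(x) = ν(a·x) identically, or a^m = −1 and ν′(x) = −ν(a·x) identically. -/

import Mathlib

open Polynomial

noncomputable def TU : ℕ → ℂ[X] × ℂ[X]
  | 0 => (1, 0)
  | n+1 => ((TU n).1 * X + (X^2 - 1) * (TU n).2, (TU n).2 * X + (TU n).1)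

lemma TU_zero : TU 0 = (1, 0) := rfl
lemma TU_succ (n : ℕ) : TU (n+1) =
    ((TU n).1 * X + (X^2 - 1) * (TU n).2, (TU n).2 * X + (TU n).1) := rfl

lemma TU_deg : ∀ n : ℕ, (TU (n+1)).1.natDegree ≤ n+1 ∧ (TU (n+1)).1.coeff (n+1) = 2^n ∧
    (TU (n+1)).2.natDegree ≤ n ∧ (TU (n+1)).2.coeff n = 2^n := by
  intro n
  induction n with
  | zero => norm_num [TU]
  | succ n ih =>
    obtain ⟨hT, hTc, hU, hUc⟩ := ih
    rw [TU_succ (n+1)]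
    refine ⟨?_, ?_, ?_, ?_⟩
    · apply le_trans (natDegree_add_le _ _)
      simp only [max_le_iff]
      constructor
      · exact le_trans natDegree_mul_le (by rw [natDegree_X]; omega)
      · refine le_trans (natDegree_mul_le) ?_
        have : (X^2 - 1 : ℂ[X]).natDegree ≤ 2 := by
          apply le_trans (natDegree_sub_le _ _); simp
        omega
    · have h1 : ((TU (n+1)).1 * X).coeff (n+2) = 2^n := by
        rw [coeff_mul_X]; exact hTc
      have h2 : ((X^2 - 1) * (TU (n+1)).2).coeff (n+2) = 2^n := by
        have : (X^2 - 1) * (TU (n+1)).2 = X^2 * (TU (n+1)).2 - (TU (n+1)).2 := by ring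
        rw [this, coeff_sub]
        have h3 : (X^2 * (TU (n+1)).2).coeff (n+2) = (TU (n+1)).2.coeff n :=
          coeff_X_pow_mul _ _ _
        rw [h3, hUc, coeff_eq_zero_of_natDegree_lt (lt_of_le_of_lt hU (by omega))]
        ring
      simp only [Prod.fst, coeff_add, h1, h2]; ring
    · apply le_trans (natDegree_add_le _ _)
      simp only [max_le_iff]
      exact ⟨le_trans natDegree_mul_le (by rw [natDegree_X]; omega), le_trans hT (by omega)⟩
    · have h1 : ((TU (n+1)).2 * X).coeff (n+1) = 2^n := by
        rw [coeff_mul_X]; exact hUc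
      simp only [Prod.snd, coeff_add, h1, hTc]; ring

lemma Tch_natDegree : ∀ n : ℕ, (TU n).1.natDegree = n := by
  intro n
  cases n with
  | zero => simp [TU]
  | succ n =>
    obtain ⟨hT, hTc, -, -⟩ := TU_deg n
    refine le_antisymm hT (le_natDegree_of_ne_zero ?_)
    rw [hTc]; exact pow_ne_zero n two_ne_zero

lemma Tch_leadingCoeff (n : ℕ) : (TU (n+1)).1.leadingCoeff = 2^n := by
  rw [leadingCoeff, Tch_natDegree]; exact (TU_deg n).2.1

lemma coeff_comp_C_mul_X (f : ℂ[X]) (c : ℂ) (k : ℕ) :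
    (f.comp (C c * X)).coeff k = c ^ k * f.coeff k := by
  induction f using Polynomial.induction_on' with
  | add p q hp hq => simp [add_comp, coeff_add, hp, hq, mul_add]
  | monomial n a =>
    have e : (monomial n a).comp (C c * X) = monomial n (a * c^n) := by
      rw [← C_mul_X_pow_eq_monomial, ← C_mul_X_pow_eq_monomial, mul_comp, C_comp, pow_comp,
        X_comp, mul_pow, ← C_pow]
      simp [C_mul, mul_comm, mul_left_comm]
    rw [e, coeff_monomial, coeff_monomial]
    by_cases h : n = k
    · subst h; simp [mul_comm]
    · simp [h]

lemma TU_parity : ∀ n : ℕ, (TU n).1.comp (C (-1) * X) = C ((-1:ℂ)^n) * (TU n).1 ∧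
    (TU n).2.comp (C (-1) * X) = C ((-1:ℂ)^(n+1)) * (TU n).2 := by
  intro n
  induction n with
  | zero => simp [TU]
  | succ n ih =>
    obtain ⟨hT, hU⟩ := ih
    rw [TU_succ]
    constructor
    · simp only [add_comp, mul_comp, X_comp, pow_comp, one_comp, sub_comp, hT, hU]
      simp only [map_neg, map_pow, map_one]
      ring
    · simp only [add_comp, mul_comp, X_comp, hT, hU]
      simp only [map_neg, map_pow, map_one]
      ring

lemma Tch_coeff_even_sub_one (m : ℕ) (hm : Odd m) : (TU m).1.coeff (m - 1) = 0 := by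
  have h := (TU_parity m).1
  have h2 := congrArg (fun p => coeff p (m-1)) h
  simp only [coeff_comp_C_mul_X, coeff_C_mul] at h2
  obtain ⟨k, rfl⟩ := hm
  have e1 : (-1:ℂ) ^ (2*k+1-1) = 1 := by
    rw [Nat.add_sub_cancel, pow_mul]; norm_num
  have e2 : (-1:ℂ) ^ (2*k+1) = -1 := by
    rw [pow_succ, pow_mul]; norm_num
  rw [e1, e2, one_mul] at h2
  linear_combination h2 / 2

lemma TU_succ_fst (n : ℕ) : (TU (n+1)).1 = (TU n).1 * X + (X^2 - 1) * (TU n).2 := rfl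
lemma TU_succ_snd (n : ℕ) : (TU (n+1)).2 = (TU n).2 * X + (TU n).1 := rfl

lemma TU_back (n : ℕ) : X * (TU (n+1)).1 - (X^2-1) * (TU (n+1)).2 = (TU n).1 ∧
    (TU (n+1)).1 - X * (TU (n+1)).2 = -(TU n).2 := by
  rw [TU_succ_fst, TU_succ_snd]
  constructor <;> ring

lemma pell_classify (N : ℕ) : ∀ w q : ℂ[X], w.natDegree ≤ N → w^2 - (X^2-1)*q^2 = 1 →
    ∃ n : ℕ, (w = (TU n).1 ∨ w = -(TU n).1) ∧ (q = (TU n).2 ∨ q = -(TU n).2) := by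
  have hDne : (X^2-1 : ℂ[X]) ≠ 0 := by
    rw [(by rw [C_1] : (X^2-1 : ℂ[X]) = X^2 - C 1)]
    exact X_pow_sub_C_ne_zero (by norm_num) 1
  have hDdeg : (X^2-1 : ℂ[X]).natDegree = 2 := by
    rw [(by rw [C_1] : (X^2-1 : ℂ[X]) = X^2 - C 1)]
    exact natDegree_X_pow_sub_C
  have hDlc : (X^2-1 : ℂ[X]).leadingCoeff = 1 := by
    rw [(by rw [C_1] : (X^2-1 : ℂ[X]) = X^2 - C 1)]
    exact (monic_X_pow_sub_C 1 (by norm_num)).leadingCoeff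
  induction N with
  | zero =>
    intro w q hdeg hpell
    have hq : q = 0 := by
      by_contra hq0
      have hmul : (X^2-1)*q^2 = w^2 - 1 := by linear_combination -hpell
      have h1 : ((X^2-1)*q^2).natDegree = 2 + 2*q.natDegree := by
        rw [natDegree_mul hDne (pow_ne_zero 2 hq0), natDegree_pow, hDdeg]
      have h2 : (w^2 - 1).natDegree = 0 := by
        rw [(by rw [C_1] : (w^2 - 1 : ℂ[X]) = w^2 - C 1), natDegree_sub_C, natDegree_pow]
        omega
      rw [hmul, h2] at h1
      omega
    subst hq
    have h1 : (w - 1) * (w + 1) = 0 := by linear_combination hpell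
    rcases mul_eq_zero.1 h1 with h | h
    · exact ⟨0, Or.inl (by show w = 1; linear_combination h), Or.inl rfl⟩
    · exact ⟨0, Or.inr (by show w = -(1:ℂ[X]); linear_combination h), Or.inl rfl⟩
  | succ N ih =>
    intro w q hdeg hpell
    by_cases hle : w.natDegree ≤ N
    · exact ih w q hle hpell
    have hdw : w.natDegree = N + 1 := by omega
    have hw0 : w ≠ 0 := fun h => by simp [h] at hdw
    have hq0 : q ≠ 0 := by
      rintro rfl
      have h1 : w^2 = 1 := by linear_combination hpell
      have := congrArg natDegree h1
      rw [natDegree_pow, hdw, natDegree_one] at this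
      omega
    have hmul : (X^2-1)*q^2 = w^2 - 1 := by linear_combination -hpell
    have hnd2 : (w^2 - 1).natDegree = 2*N+2 := by
      rw [(by rw [C_1] : (w^2 - 1 : ℂ[X]) = w^2 - C 1), natDegree_sub_C, natDegree_pow, hdw]
      omega
    have hqdeg : q.natDegree = N := by
      have h1 : ((X^2-1)*q^2).natDegree = 2 + 2*q.natDegree := by
        rw [natDegree_mul hDne (pow_ne_zero 2 hq0), natDegree_pow, hDdeg]
      rw [hmul, hnd2] at h1
      omega
    -- leading coefficients
    have hlc2 : w.leadingCoeff^2 = q.leadingCoeff^2 := by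
      have h1 : ((X^2-1)*q^2).leadingCoeff = q.leadingCoeff^2 := by
        rw [leadingCoeff_mul, hDlc, leadingCoeff_pow, one_mul]
      have h2 : (w^2 - 1).leadingCoeff = w.leadingCoeff^2 := by
        rw [leadingCoeff, hnd2, coeff_sub, coeff_one, if_neg (by omega), sub_zero]
        have h3 : (w^2).natDegree = 2*N+2 := by rw [natDegree_pow, hdw]; omega
        rw [← h3, ← leadingCoeff, leadingCoeff_pow]
      rw [hmul, h2] at h1
      exact h1
    have key : ∀ qq : ℂ[X], qq ≠ 0 → qq.natDegree = N →
        w^2 - (X^2-1)*qq^2 = 1 → w.leadingCoeff = qq.leadingCoeff →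
        ∃ n : ℕ, (w = (TU n).1 ∨ w = -(TU n).1) ∧ (qq = (TU n).2 ∨ qq = -(TU n).2) := by
      intro q hq0 hqdeg hpell hlc
      have hpell' : (X*w - (X^2-1)*q)^2 - (X^2-1)*(X*q - w)^2 = 1 := by
        linear_combination hpell
      have hlcw : w.leadingCoeff ≠ 0 := leadingCoeff_ne_zero.2 hw0
      have hco : (X*q + w).coeff (N+1) = 2 * w.leadingCoeff := by
        have e1 : q.coeff N = w.leadingCoeff := by rw [hlc, ← hqdeg]; rfl
        have e2 : w.coeff (N+1) = w.leadingCoeff := by rw [← hdw]; rfl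
        rw [coeff_add, coeff_X_mul, e1, e2]; ring
      have hXqw_ne : X*q + w ≠ 0 := fun h => by
        rw [h, coeff_zero] at hco
        exact hlcw (by linear_combination -hco/2)
      have hXqw_deg : (X*q + w).natDegree = N+1 := by
        apply le_antisymm
        · apply le_trans (natDegree_add_le _ _)
          simp only [max_le_iff]
          constructor
          · exact le_trans natDegree_mul_le (by rw [natDegree_X, hqdeg]; omega)
          · omega
        · apply le_natDegree_of_ne_zero
          rw [hco]
          intro h
          exact hlcw (by linear_combination h/2)
      have hq' : (X*q - w) * (X*q + w) = q^2 - 1 := by linear_combination -hpell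
      by_cases hq'0 : X*q - w = 0
      · -- w = X*q, q = ±1
        have hw : w = X*q := by linear_combination -hq'0
        rw [hw] at hpell
        have hfact : (q - 1) * (q + 1) = 0 := by linear_combination hpell
        have hT1 : (TU 1).1 = X := by
          rw [TU_succ_fst]; show (1:ℂ[X]) * X + (X^2-1) * 0 = X; ring
        have hU1 : (TU 1).2 = 1 := by
          rw [TU_succ_snd]; show (0:ℂ[X]) * X + 1 = 1; ring
        rcases mul_eq_zero.1 hfact with h|h
        · have hq1 : q = 1 := by linear_combination h
          exact ⟨1, Or.inl (by rw [hw, hq1, hT1, mul_one]), Or.inl (by rw [hq1, hU1])⟩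
        · have hq1 : q = -1 := by linear_combination h
          exact ⟨1, Or.inr (by rw [hw, hq1, hT1]; ring), Or.inr (by rw [hq1, hU1])⟩
      · have hsub_ne : q^2 - 1 ≠ 0 := by rw [← hq']; exact mul_ne_zero hq'0 hXqw_ne
        have hndq' : (X*q - w).natDegree + (N+1) ≤ 2*N := by
          have h1 := natDegree_mul hq'0 hXqw_ne
          rw [hq', hXqw_deg] at h1
          have h2 : (q^2 - 1).natDegree ≤ 2*N := by
            rw [(by rw [C_1] : (q^2 - 1 : ℂ[X]) = q^2 - C 1), natDegree_sub_C, natDegree_pow,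
              hqdeg]
          omega
        have hndw' : (X*w - (X^2-1)*q).natDegree ≤ N := by
          have h1 : (X*w - (X^2-1)*q)^2 = (X^2-1)*(X*q-w)^2 + 1 := by linear_combination hpell'
          have h2 : ((X^2-1)*(X*q-w)^2 + 1).natDegree ≤ 2*N := by
            apply le_trans (natDegree_add_le _ _)
            simp only [max_le_iff, natDegree_one]
            refine ⟨le_trans natDegree_mul_le ?_, by omega⟩
            rw [hDdeg, natDegree_pow]
            omega
          have h3 : ((X*w - (X^2-1)*q)^2).natDegree = 2 * (X*w - (X^2-1)*q).natDegree :=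
            natDegree_pow _ _
          have h4 : ((X*w - (X^2-1)*q)^2).natDegree ≤ 2*N := by rw [h1]; exact h2
          rw [h3] at h4
          omega
        obtain ⟨n, hw'', hq''⟩ := ih (X*w - (X^2-1)*q) (X*q - w) hndw' hpell'
        have hwrec : w = X*(X*w - (X^2-1)*q) + (X^2-1)*(X*q - w) := by ring
        have hqrec : q = X*(X*q - w) + (X*w - (X^2-1)*q) := by ring
        rcases hw'' with hW|hW <;> rcases hq'' with hQ|hQ
        · exact ⟨n+1, Or.inl (by rw [hwrec, hW, hQ, TU_succ_fst]; ring),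
            Or.inl (by rw [hqrec, hW, hQ, TU_succ_snd]; ring)⟩
        · match n with
          | 0 => exact absurd (by rw [hQ]; show -(0:ℂ[X]) = 0; ring) hq'0
          | k+1 =>
            obtain ⟨hb1, hb2⟩ := TU_back k
            refine ⟨k, Or.inl ?_, Or.inr ?_⟩
            · rw [hwrec, hW, hQ]; linear_combination hb1
            · rw [hqrec, hW, hQ]; linear_combination hb2
        · match n with
          | 0 => exact absurd (by rw [hQ]; rfl) hq'0
          | k+1 =>
            obtain ⟨hb1, hb2⟩ := TU_back k
            refine ⟨k, Or.inr ?_, Or.inl ?_⟩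
            · rw [hwrec, hW, hQ]; linear_combination -hb1
            · rw [hqrec, hW, hQ]; linear_combination -hb2
        · exact ⟨n+1, Or.inr (by rw [hwrec, hW, hQ, TU_succ_fst]; ring),
            Or.inr (by rw [hqrec, hW, hQ, TU_succ_snd]; ring)⟩
    have hsq : (w.leadingCoeff - q.leadingCoeff) * (w.leadingCoeff + q.leadingCoeff) = 0 := by
      linear_combination hlc2
    rcases mul_eq_zero.1 hsq with h|h
    · exact key q hq0 hqdeg hpell (by linear_combination h)
    · obtain ⟨n, hw1, hq1⟩ := key (-q) (neg_ne_zero.2 hq0) (by rw [natDegree_neg]; exact hqdeg)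
        (by linear_combination hpell) (by rw [leadingCoeff_neg]; linear_combination h)
      refine ⟨n, hw1, ?_⟩
      rcases hq1 with h2|h2
      · exact Or.inr (by linear_combination -h2)
      · exact Or.inl (by linear_combination -h2)

lemma nu_structure (γ : ℂ) (hγ : γ ≠ 0) (ℓ : ℕ) (ν : ℂ[X])
    (hℓ : 1 ≤ ℓ) (hmo : ν.Monic) (hnd : ν.natDegree = 2*ℓ+1) (hc : ν.coeff (2*ℓ) = 0)
    (hp : ∃ g h : ℂ[X], g.Monic ∧ g.natDegree = ℓ ∧ h.Monic ∧ h.natDegree = 1 ∧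
        Squarefree (g * h) ∧ ν + C γ = g ^ 2 * h)
    (hq : ∃ g h : ℂ[X], g.Monic ∧ g.natDegree = ℓ ∧ h.Monic ∧ h.natDegree = 1 ∧
        Squarefree (g * h) ∧ ν - C γ = g ^ 2 * h) :
    ∃ σ e : ℂ, (σ = 1 ∨ σ = -1) ∧ e ≠ 0 ∧ e^(2*ℓ+1) = σ * γ * 2^(2*ℓ) ∧
      ∀ x : ℂ, ν.eval x = σ * γ * (TU (2*ℓ+1)).1.eval (e⁻¹ * x) := by
  obtain ⟨g₁, h₁, hg₁m, hg₁d, hh₁m, hh₁d, -, hfac₁⟩ := hp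
  obtain ⟨g₂, h₂, hg₂m, hg₂d, hh₂m, hh₂d, -, hfac₂⟩ := hq
  set M : ℂ := ((2*ℓ+1 : ℕ) : ℂ) with hM
  have hMne : M ≠ 0 := Nat.cast_ne_zero.2 (by omega)
  have h2γ : (2*γ) ≠ 0 := by simp [hγ]
  have hCu : C ((2*γ)⁻¹) * C (2*γ) = (1 : ℂ[X]) := by
    rw [← C_mul, inv_mul_cancel₀ h2γ, C_1]
  have hC2 : (C (2*γ) : ℂ[X]) = 2 * C γ := by rw [C_mul, map_ofNat]
  have hco : IsCoprime (ν + C γ) (ν - C γ) :=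
    ⟨C ((2*γ)⁻¹), -C ((2*γ)⁻¹), by linear_combination hCu - C ((2*γ)⁻¹) * hC2⟩
  -- derivative
  have hd₁ : g₁ ∣ derivative ν := by
    have h1 : derivative ν = derivative (ν + C γ) := by
      rw [derivative_add, derivative_C, add_zero]
    rw [h1, hfac₁]
    exact ⟨2 * derivative g₁ * h₁ + g₁ * derivative h₁, by
      simp only [derivative_mul, derivative_pow, Nat.cast_ofNat, map_ofNat, pow_one]; ring⟩
  have hd₂ : g₂ ∣ derivative ν := by
    have h1 : derivative ν = derivative (ν - C γ) := by
      rw [derivative_sub, derivative_C, sub_zero]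
    rw [h1, hfac₂]
    exact ⟨2 * derivative g₂ * h₂ + g₂ * derivative h₂, by
      simp only [derivative_mul, derivative_pow, Nat.cast_ofNat, map_ofNat, pow_one]; ring⟩
  have hdvg₁ : g₁ ∣ ν + C γ := ⟨g₁ * h₁, by rw [hfac₁]; ring⟩
  have hdvg₂ : g₂ ∣ ν - C γ := ⟨g₂ * h₂, by rw [hfac₂]; ring⟩
  have hcopg : IsCoprime g₁ g₂ :=
    (hco.of_isCoprime_of_dvd_left hdvg₁).of_isCoprime_of_dvd_right hdvg₂
  obtain ⟨k, hk⟩ := hcopg.mul_dvd hd₁ hd₂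
  have hνdc : (derivative ν).coeff (2*ℓ) = M := by
    rw [coeff_derivative]
    have : ν.coeff (2*ℓ+1) = 1 := by rw [← hnd]; exact hmo.coeff_natDegree
    rw [this, hM]; push_cast; ring
  have hgg0 : g₁ * g₂ ≠ 0 := (hg₁m.mul hg₂m).ne_zero
  have hggd : (g₁ * g₂).natDegree = 2*ℓ := by
    rw [natDegree_mul hg₁m.ne_zero hg₂m.ne_zero, hg₁d, hg₂d]; omega
  have hνd0 : derivative ν ≠ 0 := fun h => by rw [h, coeff_zero] at hνdc; exact hMne hνdc.symm
  have hk0 : k ≠ 0 := fun h => by rw [h, mul_zero] at hk; exact hνd0 hk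
  have hkd : k.natDegree = 0 := by
    have h1 : (derivative ν).natDegree ≤ 2*ℓ := by
      have := natDegree_derivative_le ν
      omega
    rw [hk, natDegree_mul hgg0 hk0, hggd] at h1
    omega
  have hkC : k = C (k.coeff 0) := (eq_C_coeff_zero_iff_natDegree_eq_zero).2 hkd
  have hder : derivative ν = (g₁ * g₂) * C M := by
    rw [hkC] at hk
    have h1 : (derivative ν).coeff (2*ℓ) = k.coeff 0 := by
      rw [hk, coeff_mul_C, ← hggd, (hg₁m.mul hg₂m).coeff_natDegree, one_mul]
    rw [hνdc] at h1
    rw [hk, ← h1]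
  -- key identity
  have KEY : (C M)^2 * (ν^2 - (C γ)^2) = (derivative ν)^2 * (h₁ * h₂) := by
    rw [hder]
    linear_combination ((C M)^2 * (ν - C γ)) * hfac₁ + ((C M)^2 * g₁^2 * h₁) * hfac₂
  -- roots of h₁ h₂
  have hh₁e : h₁ = X + C (h₁.coeff 0) := hh₁m.eq_X_add_C hh₁d
  have hh₂e : h₂ = X + C (h₂.coeff 0) := hh₂m.eq_X_add_C hh₂d
  set a : ℂ := h₁.coeff 0
  set b : ℂ := h₂.coeff 0
  have hcoph : IsCoprime h₁ h₂ :=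
    ((hco.of_isCoprime_of_dvd_left ⟨g₁^2, by rw [hfac₁]; ring⟩).of_isCoprime_of_dvd_right
      ⟨g₂^2, by rw [hfac₂]; ring⟩)
  have hab : a ≠ b := by
    intro h
    have : h₁ = h₂ := by rw [hh₁e, hh₂e, h]
    rw [← this] at hcoph
    have := isCoprime_self.1 hcoph
    have h0 := natDegree_eq_zero_of_isUnit this
    omega
  set u : ℂ := -(a+b)/2 with hu
  set e : ℂ := (a-b)/2 with he
  have he0 : e ≠ 0 := fun h => hab (by linear_combination 2*h - 2*he)
  have hu1' : C a + C b = -(2 * C u) := by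
    rw [← C_add, show a + b = -(2*u) from by rw [hu]; ring, C_neg, C_mul, map_ofNat]
  have hu2' : C a * C b = (C u)^2 - (C e)^2 := by
    rw [← C_mul, show a * b = u^2 - e^2 from by rw [hu, he]; ring, C_sub, C_pow, C_pow]
  have hhprod : h₁ * h₂ = (X - C u)^2 - (C e)^2 := by
    rw [hh₁e, hh₂e]
    linear_combination X * hu1' + hu2'
  -- compose with ψ
  set ψ : ℂ[X] := C e * X + C u with hψ
  have KEY2 : (C M)^2 * ((ν.comp ψ)^2 - (C γ)^2) =
      ((derivative ν).comp ψ)^2 * ((C e)^2 * (X^2 - 1)) := by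
    rw [hhprod] at KEY
    have h1 := congrArg (fun p : ℂ[X] => p.comp ψ) KEY
    simp only [mul_comp, sub_comp, pow_comp, C_comp, X_comp] at h1
    linear_combination h1
  have hinv1 : C γ * C γ⁻¹ = (1:ℂ[X]) := by rw [← C_mul, mul_inv_cancel₀ hγ, C_1]
  have hinv2 : C M * C M⁻¹ = (1:ℂ[X]) := by rw [← C_mul, mul_inv_cancel₀ hMne, C_1]
  have hPell : (C γ⁻¹ * ν.comp ψ)^2 -
      (X^2-1) * (C γ⁻¹ * C M⁻¹ * C e * (derivative ν).comp ψ)^2 = 1 := by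
    linear_combination (C γ⁻¹)^2 * (C M⁻¹)^2 * KEY2
      + (-(C γ⁻¹)^2 * (ν.comp ψ)^2 * (C M * C M⁻¹ + 1) + (C M * C M⁻¹ + 1)) * hinv2
      + ((C M * C M⁻¹)^2 * (C γ * C γ⁻¹ + 1)) * hinv1
  have hψd : ψ.natDegree = 1 := by
    rw [hψ, natDegree_add_C, natDegree_C_mul he0, natDegree_X]
  have hWd : (C γ⁻¹ * ν.comp ψ).natDegree = 2*ℓ+1 := by
    rw [natDegree_C_mul (inv_ne_zero hγ), natDegree_comp, hψd, hnd, mul_one]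
  obtain ⟨n, hw1, -⟩ := pell_classify (2*ℓ+1) _ _ (le_of_eq hWd) hPell
  have hn : n = 2*ℓ+1 := by
    rcases hw1 with h|h
    · rw [h, Tch_natDegree] at hWd; exact hWd
    · rw [h, natDegree_neg, Tch_natDegree] at hWd; exact hWd
  subst hn
  obtain ⟨σ, hσ, hW⟩ : ∃ σ : ℂ, (σ = 1 ∨ σ = -1) ∧
      C γ⁻¹ * ν.comp ψ = C σ * (TU (2*ℓ+1)).1 := by
    rcases hw1 with h|h
    · exact ⟨1, Or.inl rfl, by rw [h, C_1, one_mul]⟩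
    · exact ⟨-1, Or.inr rfl, by rw [h, C_neg, C_1]; ring⟩
  have hcomp : ν.comp ψ = C (σ * γ) * (TU (2*ℓ+1)).1 := by
    have h1 := congrArg (fun p : ℂ[X] => C γ * p) hW
    rw [← mul_assoc, hinv1, one_mul] at h1
    rw [h1, C_mul]; ring
  set r : ℂ[X] := ν - X^(2*ℓ+1) with hr
  have hν_split : ν = X^(2*ℓ+1) + r := by rw [hr]; ring
  have hrd : r.natDegree ≤ 2*ℓ - 1 := by
    rw [natDegree_le_iff_coeff_eq_zero]
    intro N hN
    have h3 : N = 2*ℓ ∨ N = 2*ℓ+1 ∨ 2*ℓ+1 < N := by omega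
    rw [hr, coeff_sub, coeff_X_pow]
    rcases h3 with h3|h3|h3
    · subst h3; rw [hc, if_neg (by omega)]; ring
    · subst h3; rw [if_pos rfl, ← hnd, hmo.coeff_natDegree]; ring
    · rw [coeff_eq_zero_of_natDegree_lt (by omega : ν.natDegree < N), if_neg (by omega)]; ring
  have hrcd : (r.comp (X + C u)).natDegree < 2*ℓ := by
    have h1 : (r.comp (X + C u)).natDegree ≤ r.natDegree := by
      have h2 := natDegree_comp_le (p := r) (q := X + C u)
      rwa [natDegree_X_add_C, mul_one] at h2
    omega
  have hμeq : ν.comp (X + C u) = (X + C u)^(2*ℓ+1) + r.comp (X + C u) := by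
    rw [hν_split, add_comp, pow_comp, X_comp]
  have hμtop : (ν.comp (X + C u)).coeff (2*ℓ+1) = 1 := by
    rw [hμeq, coeff_add, coeff_X_add_C_pow,
      coeff_eq_zero_of_natDegree_lt (by omega : (r.comp (X + C u)).natDegree < 2*ℓ+1)]
    simp
  have hμsub : (ν.comp (X + C u)).coeff (2*ℓ) = M * u := by
    rw [hμeq, coeff_add, coeff_X_add_C_pow, coeff_eq_zero_of_natDegree_lt hrcd]
    rw [show 2*ℓ+1 - 2*ℓ = 1 from by omega, Nat.choose_succ_self_right]
    rw [hM]; push_cast; try ring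
  have hassoc : ν.comp ψ = (ν.comp (X + C u)).comp (C e * X) := by
    rw [comp_assoc, add_comp, X_comp, C_comp, hψ]
  have hct : (ν.comp ψ).coeff (2*ℓ+1) = e^(2*ℓ+1) := by
    rw [hassoc, coeff_comp_C_mul_X, hμtop, mul_one]
  have hcs : (ν.comp ψ).coeff (2*ℓ) = e^(2*ℓ) * (M*u) := by
    rw [hassoc, coeff_comp_C_mul_X, hμsub]
  have hTt : ((TU (2*ℓ+1)).1).coeff (2*ℓ+1) = 2^(2*ℓ) := (TU_deg (2*ℓ)).2.1
  have hTs : ((TU (2*ℓ+1)).1).coeff (2*ℓ) = 0 := by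
    have h1 := Tch_coeff_even_sub_one (2*ℓ+1) ⟨ℓ, by ring⟩
    rwa [show 2*ℓ+1-1 = 2*ℓ from by omega] at h1
  have hem : e^(2*ℓ+1) = σ * γ * 2^(2*ℓ) := by
    have h1 := congrArg (fun p : ℂ[X] => coeff p (2*ℓ+1)) hcomp
    simp only [coeff_C_mul] at h1
    rw [hct, hTt] at h1
    linear_combination h1
  have hu0 : u = 0 := by
    have h1 := congrArg (fun p : ℂ[X] => coeff p (2*ℓ)) hcomp
    simp only [coeff_C_mul] at h1
    rw [hcs, hTs, mul_zero] at h1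
    rcases mul_eq_zero.1 h1 with h|h
    · exact absurd h (pow_ne_zero _ he0)
    · rcases mul_eq_zero.1 h with h|h
      · exact absurd h hMne
      · exact h
  refine ⟨σ, e, hσ, he0, hem, fun x => ?_⟩
  have h1 := congrArg (eval (e⁻¹ * x)) hcomp
  rw [eval_comp, hψ] at h1
  simp only [eval_add, eval_mul, eval_C, eval_X] at h1
  have h2 : e * (e⁻¹ * x) + u = x := by
    rw [hu0, add_zero, ← mul_assoc, mul_inv_cancel₀ he0, one_mul]
  rw [h2] at h1
  rw [h1]
  try ring

/-- Uniqueness, up to `x ↦ ax` with `aᵐ = 1` (and a global sign with `aᵐ = −1`), of a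
monic degree-`m = 2ℓ+1` polynomial with vanishing `x^{m−1}` coefficient such that each of
`ν + γ` and `ν − γ` has exactly `ℓ` double roots and all other roots simple. -/
theorem stmt5 (γ : ℂ) (hγ : γ ≠ 0) (ℓ : ℕ) (hℓ : 1 ≤ ℓ)
    (ν ν' : ℂ[X])
    (hν : ν.Monic ∧ ν.natDegree = 2 * ℓ + 1 ∧ ν.coeff (2 * ℓ) = 0 ∧
      (∃ g h : ℂ[X], g.Monic ∧ g.natDegree = ℓ ∧ h.Monic ∧ h.natDegree = 1 ∧
        Squarefree (g * h) ∧ ν + C γ = g ^ 2 * h) ∧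
      (∃ g h : ℂ[X], g.Monic ∧ g.natDegree = ℓ ∧ h.Monic ∧ h.natDegree = 1 ∧
        Squarefree (g * h) ∧ ν - C γ = g ^ 2 * h))
    (hν' : ν'.Monic ∧ ν'.natDegree = 2 * ℓ + 1 ∧ ν'.coeff (2 * ℓ) = 0 ∧
      (∃ g h : ℂ[X], g.Monic ∧ g.natDegree = ℓ ∧ h.Monic ∧ h.natDegree = 1 ∧
        Squarefree (g * h) ∧ ν' + C γ = g ^ 2 * h) ∧
      (∃ g h : ℂ[X], g.Monic ∧ g.natDegree = ℓ ∧ h.Monic ∧ h.natDegree = 1 ∧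
        Squarefree (g * h) ∧ ν' - C γ = g ^ 2 * h)) :
    ∃ a : ℂ, (a ^ (2 * ℓ + 1) = 1 ∧ ∀ x : ℂ, ν'.eval x = ν.eval (a * x)) ∨
      (a ^ (2 * ℓ + 1) = -1 ∧ ∀ x : ℂ, ν'.eval x = - ν.eval (a * x)) := by
  obtain ⟨hm1, hd1, hc1, hp1, hq1⟩ := hν
  obtain ⟨hm2, hd2, hc2, hp2, hq2⟩ := hν'
  obtain ⟨σ, e, hσ, he0, hem, heval⟩ := nu_structure γ hγ ℓ ν hℓ hm1 hd1 hc1 hp1 hq1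
  obtain ⟨σ', e', hσ', he0', hem', heval'⟩ := nu_structure γ hγ ℓ ν' hℓ hm2 hd2 hc2 hp2 hq2
  refine ⟨e * e'⁻¹, ?_⟩
  have hax : ∀ x : ℂ, ν.eval ((e * e'⁻¹) * x) = σ * γ * (TU (2*ℓ+1)).1.eval (e'⁻¹ * x) := by
    intro x
    rw [heval]
    have h3 : e⁻¹ * (e * e'⁻¹ * x) = e'⁻¹ * x := by
      field_simp
    rw [h3]
  have hσ'ne : σ' ≠ 0 := by rcases hσ' with h|h <;> · rw [h]; norm_num
  have h2L : (2:ℂ)^(2*ℓ) ≠ 0 := pow_ne_zero _ two_ne_zero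
  have hσ'inv : σ'⁻¹ = σ' := by rcases hσ' with h|h <;> · rw [h]; norm_num
  have hpow : (e * e'⁻¹)^(2*ℓ+1) = σ * σ' := by
    rw [mul_pow, inv_pow, hem, hem', mul_inv, mul_inv, hσ'inv]
    field_simp
  rcases hσ with h1|h1 <;> rcases hσ' with h2|h2
  · refine Or.inl ⟨by rw [hpow, h1, h2]; ring, fun x => ?_⟩
    rw [heval' x, hax x, h1, h2]
  · refine Or.inr ⟨by rw [hpow, h1, h2]; ring, fun x => ?_⟩
    rw [heval' x, hax x, h1, h2]
    try ring
  · refine Or.inr ⟨by rw [hpow, h1, h2]; ring, fun x => ?_⟩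
    rw [heval' x, hax x, h1, h2]
    try ring
  · refine Or.inl ⟨by rw [hpow, h1, h2]; ring, fun x => ?_⟩
    rw [heval' x, hax x, h1, h2]
    try ring
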